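/- Let ℓ ≥ 2 and let b_1, …, b_ℓ ≥ 0 be integers. The assignment i ↦ ξ(i), sending a vertex of V_ℓ(ξ) to its attached partition, is injective. -/

import Mathlib

/-- `resI r s` is the remainder of `s` upon division by `r` if `r ∤ s`, and equals `r`
if `r ∣ s`. -/
def resI (r s : ℤ) : ℤ := if r ∣ s then r else s % r

/-- `sI i j k` is `s(i)`, defined by `i - jk = r(i) + s(i)(k-1)`. -/
def sI (i j k : ℤ) : ℤ := (i - j * k - resI (k - 1) (i - j * k)) / (k - 1)

/-- The vertex set `V_ℓ(ξ)` for `ξ = 1^{b_1}2^{b_2}⋯ℓ^{b_ℓ}`. -/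
def Vset (ℓ : ℤ) (b : ℤ → ℤ) : Set (ℤ × ℤ × ℤ) :=
  {v | 0 ≤ v.1 ∧ 0 ≤ v.2.1 ∧ 2 ≤ v.2.2 ∧ v.2.2 ≤ ℓ ∧
    v.1 ≤ ∑ m ∈ Finset.Icc 1 (v.2.2 - 1), m * b m ∧
    v.1 - v.2.1 * v.2.2 ≥ v.2.2 * (1 - if v.2.2 = ℓ then 1 else 0)}

/-- The partition (multiset of parts) `ξ(i)` attached to a vertex `(i,j,k)`:
if `i - jk > 0` (equivalently `≠ 0` on `V_ℓ(ξ)`), it has one part `r(i)`, `s(i)` parts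
`k-1`, `j + b_k` parts `k`, and `b_m` parts `m` for `k < m ≤ ℓ`; if `i = jk` (which on
`V_ℓ(ξ)` forces `k = ℓ`), it has `b_ℓ + j` parts all equal to `ℓ`. -/
noncomputable def xiOf (ℓ : ℤ) (b : ℤ → ℤ) (i j k : ℤ) : Multiset ℤ :=
  if i - j * k = 0 then Multiset.replicate (b ℓ + j).toNat ℓ
  else
    {resI (k - 1) (i - j * k)} + Multiset.replicate (sI i j k).toNat (k - 1)
      + Multiset.replicate (j + b k).toNat k
      + ∑ m ∈ Finset.Icc (k + 1) ℓ, Multiset.replicate (b m).toNat m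


lemma resI_pos (m n : ℤ) (hm : 1 ≤ m) : 1 ≤ resI m n := by
  unfold resI
  split
  · exact hm
  · rename_i hnd
    have h0 : 0 ≤ n % m := Int.emod_nonneg n (by omega)
    have h1 : n % m ≠ 0 := fun h => hnd (Int.dvd_of_emod_eq_zero h)
    omega

lemma resI_le (m n : ℤ) (hm : 1 ≤ m) : resI m n ≤ m := by
  unfold resI
  split
  · exact le_refl m
  · have := Int.emod_lt_of_pos n (show (0:ℤ) < m by omega)
    omega

lemma resI_dvd_sub (m n : ℤ) : m ∣ n - resI m n := by
  unfold resI
  split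
  · rename_i h; exact dvd_sub h dvd_rfl
  · have h := Int.mul_ediv_add_emod n m
    exact ⟨n / m, by omega⟩

lemma sI_spec (i j k : ℤ) (hk : 2 ≤ k) :
    resI (k - 1) (i - j * k) + sI i j k * (k - 1) = i - j * k := by
  unfold sI
  rw [Int.ediv_mul_cancel (resI_dvd_sub (k - 1) (i - j * k))]
  ring

lemma sI_nonneg (i j k : ℤ) (hk : 2 ≤ k) (hn : 0 < i - j * k) : 0 ≤ sI i j k := by
  set n := i - j * k with hdef
  unfold sI resI
  rw [← hdef]
  split
  · rename_i h
    have hkn : k - 1 ≤ n := Int.le_of_dvd hn h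
    exact Int.ediv_nonneg (by omega) (by omega)
  · have h0 : 0 ≤ n % (k - 1) := Int.emod_nonneg n (by omega)
    have h1 : n % (k - 1) < k - 1 := Int.emod_lt_of_pos n (by omega)
    have hd : 0 ≤ n / (k - 1) := Int.ediv_nonneg (by omega) (by omega)
    have h := Int.mul_ediv_add_emod n (k - 1)
    exact Int.ediv_nonneg (by nlinarith) (by omega)

lemma sI_one_le (i j k : ℤ) (hk : 2 ≤ k) (hn : k ≤ i - j * k) : 1 ≤ sI i j k := by
  have h1 := sI_spec i j k hk
  have h2 := resI_le (k - 1) (i - j * k) (by omega)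
  by_contra h
  push_neg at h
  have : sI i j k * (k - 1) ≤ 0 := mul_nonpos_of_nonpos_of_nonneg (by omega) (by omega)
  omega

lemma countP_replicate (p : ℤ → Prop) [DecidablePred p] (n : ℕ) (a : ℤ) :
    Multiset.countP p (Multiset.replicate n a) = if p a then n else 0 := by
  induction n with
  | zero => simp
  | succ n ih =>
    rw [Multiset.replicate_succ, Multiset.countP_cons, ih]
    split <;> simp

lemma countP_singleton (p : ℤ → Prop) [DecidablePred p] (a : ℤ) :
    Multiset.countP p ({a} : Multiset ℤ) = if p a then 1 else 0 := by
  have : ({a} : Multiset ℤ) = Multiset.replicate 1 a := by simp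
  rw [this, countP_replicate]

/-- Key counting lemma: two nonzero-type partitions with `k < k'` cannot be equal. -/
lemma key_lt (ℓ : ℤ) (b : ℤ → ℤ)
    (i j k i' j' k' : ℤ) (hk2 : 2 ≤ k) (hkk : k < k') (hkl' : k' ≤ ℓ)
    (hn : k ≤ i - j * k)
    (heq : ({resI (k - 1) (i - j * k)} + Multiset.replicate (sI i j k).toNat (k - 1)
      + Multiset.replicate (j + b k).toNat k
      + ∑ m ∈ Finset.Icc (k + 1) ℓ, Multiset.replicate (b m).toNat m)
      = ({resI (k' - 1) (i' - j' * k')} + Multiset.replicate (sI i' j' k').toNat (k' - 1)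
      + Multiset.replicate (j' + b k').toNat k'
      + ∑ m ∈ Finset.Icc (k' + 1) ℓ, Multiset.replicate (b m).toNat m)) : False := by
  set c : ℤ := k' - 1 with hc
  have hcount := congrArg (Multiset.countP (· < c)) heq
  simp only [Multiset.countP_add] at hcount
  -- left side pieces
  have hr : resI (k - 1) (i - j * k) < c := by
    have := resI_le (k - 1) (i - j * k) (by omega); omega
  have hs1 : 1 ≤ (sI i j k).toNat := by
    have := sI_one_le i j k hk2 hn; omega
  rw [countP_singleton, if_pos hr] at hcount
  rw [countP_replicate, if_pos (show k - 1 < c by omega)] at hcount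
  -- right side pieces
  rw [countP_singleton (· < c) (resI (k' - 1) (i' - j' * k'))] at hcount
  rw [countP_replicate (· < c) _ (k' - 1), if_neg (show ¬ (k' - 1 < c) by omega)] at hcount
  rw [countP_replicate (· < c) _ k', if_neg (show ¬ (k' < c) by omega)] at hcount
  have hsum' : Multiset.countP (· < c)
      (∑ m ∈ Finset.Icc (k' + 1) ℓ, Multiset.replicate (b m).toNat m) = 0 := by
    rw [Multiset.countP_eq_zero]
    intro a ha
    rw [Multiset.mem_sum] at ha
    obtain ⟨m, hm, ham⟩ := ha
    rw [Finset.mem_Icc] at hm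
    have := Multiset.eq_of_mem_replicate ham
    simp only [this]
    omega
  rw [hsum'] at hcount
  split at hcount <;> omega

/-- Let `ℓ ≥ 2` and `b_1, …, b_ℓ ≥ 0`.  The assignment `i ↦ ξ(i)`, sending
a vertex of `V_ℓ(ξ)` to its attached partition, is injective. -/
theorem stmt8 (ℓ : ℤ) (hℓ : 2 ≤ ℓ) (b : ℤ → ℤ) (hb : ∀ m, 0 ≤ b m) :
    Set.InjOn (fun v : ℤ × ℤ × ℤ => xiOf ℓ b v.1 v.2.1 v.2.2) (Vset ℓ b) := by
  rintro ⟨i, j, k⟩ ⟨hi, hj, hk2, hkl, hisum, hineq⟩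
    ⟨i', j', k'⟩ ⟨hi', hj', hk2', hkl', hisum', hineq'⟩ heq
  simp only [xiOf] at heq
  dsimp only at hi hj hk2 hkl hisum hineq hi' hj' hk2' hkl' hisum' hineq'
  simp only [ge_iff_le] at hineq hineq'
  -- basic nonnegativity of i - j*k
  have hnn : 0 ≤ i - j * k := by
    by_cases h : k = ℓ
    · subst h; simp at hineq; linarith
    · simp [h] at hineq; linarith
  have hnn' : 0 ≤ i' - j' * k' := by
    by_cases h : k' = ℓ
    · subst h; simp at hineq'; linarith
    · simp [h] at hineq'; linarith
  by_cases hz : i - j * k = 0 <;> by_cases hz' : i' - j' * k' = 0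
  · -- both zero: k = k' = ℓ
    rw [if_pos hz, if_pos hz'] at heq
    have hkeq : k = ℓ := by
      by_contra h; simp [h] at hineq; linarith
    have hkeq' : k' = ℓ := by
      by_contra h; simp [h] at hineq'; linarith
    have hcard := congrArg Multiset.card heq
    simp only [Multiset.card_replicate] at hcard
    have hbℓ := hb ℓ
    have hjj : j = j' := by omega
    have hkk : k = k' := by omega
    subst hkk; subst hjj
    have : i = i' := by linarith
    rw [this]
  · -- left zero, right nonzero : contradiction
    rw [if_pos hz, if_neg hz'] at heq
    exfalso
    have hmem : resI (k' - 1) (i' - j' * k') ∈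
        Multiset.replicate (b ℓ + j).toNat ℓ := by
      rw [heq]
      refine Multiset.mem_add.2 (Or.inl (Multiset.mem_add.2 (Or.inl
        (Multiset.mem_add.2 (Or.inl ?_)))))
      simp
    have := Multiset.eq_of_mem_replicate hmem
    have := resI_le (k' - 1) (i' - j' * k') (by omega)
    omega
  · -- right zero, left nonzero : contradiction
    rw [if_neg hz, if_pos hz'] at heq
    exfalso
    have hmem : resI (k - 1) (i - j * k) ∈
        Multiset.replicate (b ℓ + j').toNat ℓ := by
      rw [← heq]
      refine Multiset.mem_add.2 (Or.inl (Multiset.mem_add.2 (Or.inl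
        (Multiset.mem_add.2 (Or.inl ?_)))))
      simp
    have := Multiset.eq_of_mem_replicate hmem
    have := resI_le (k - 1) (i - j * k) (by omega)
    omega
  · -- both nonzero
    rw [if_neg hz, if_neg hz'] at heq
    -- first: k = k'
    have hkk : k = k' := by
      by_contra h
      rcases lt_or_gt_of_ne h with hlt | hgt
      · have hkne : k ≠ ℓ := by omega
        simp only [if_neg hkne, mul_one, sub_zero] at hineq
        exact key_lt ℓ b i j k i' j' k' hk2 hlt hkl' (by linarith) heq
      · have hkne' : k' ≠ ℓ := by omega
        simp only [if_neg hkne', mul_one, sub_zero] at hineq'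
        exact key_lt ℓ b i' j' k' i j k hk2' hgt hkl (by linarith) heq.symm
    subst hkk
    -- second: j = j' via count of k
    have hcnt := congrArg (Multiset.count k) heq
    simp only [Multiset.count_add] at hcnt
    have hrlt : k ≠ resI (k - 1) (i - j * k) := by
      have := resI_le (k - 1) (i - j * k) (by omega); omega
    have hrlt' : k ≠ resI (k - 1) (i' - j' * k) := by
      have := resI_le (k - 1) (i' - j' * k) (by omega); omega
    have hsum0 : Multiset.count k
        (∑ m ∈ Finset.Icc (k + 1) ℓ, Multiset.replicate (b m).toNat m) = 0 := by
      rw [Multiset.count_eq_zero]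
      intro ha
      rw [Multiset.mem_sum] at ha
      obtain ⟨m, hm, ham⟩ := ha
      rw [Finset.mem_Icc] at hm
      have := Multiset.eq_of_mem_replicate ham
      omega
    have c1 : ∀ n : ℤ, k ≠ n → Multiset.count k ({n} : Multiset ℤ) = 0 := fun n h => by
      rw [Multiset.count_singleton, if_neg h]
    have c2 : ∀ t : ℕ, Multiset.count k (Multiset.replicate t (k - 1)) = 0 := fun t => by
      rw [Multiset.count_replicate, if_neg (show k - 1 ≠ k by omega)]
    have c3 : ∀ t : ℕ, Multiset.count k (Multiset.replicate t k) = t := fun t => by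
      rw [Multiset.count_replicate, if_pos rfl]
    rw [c1 _ hrlt, c1 _ hrlt', c2, c2, c3, c3, hsum0] at hcnt
    have hbk := hb k
    have hjj : j = j' := by omega
    subst hjj
    -- third: i = i' via cancelling and sums
    have heq2 : ({resI (k - 1) (i - j * k)} + Multiset.replicate (sI i j k).toNat (k - 1))
        = ({resI (k - 1) (i' - j * k)} + Multiset.replicate (sI i' j k).toNat (k - 1)) := by
      have := add_right_cancel heq
      exact add_right_cancel this
    have hsum := congrArg Multiset.sum heq2
    simp only [Multiset.sum_add, Multiset.sum_singleton, Multiset.sum_replicate,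
      nsmul_eq_mul] at hsum
    have hs1 : ((sI i j k).toNat : ℤ) = sI i j k :=
      Int.toNat_of_nonneg (sI_nonneg i j k hk2 (by omega))
    have hs2 : ((sI i' j k).toNat : ℤ) = sI i' j k :=
      Int.toNat_of_nonneg (sI_nonneg i' j k hk2 (by omega))
    rw [hs1, hs2] at hsum
    have e1 := sI_spec i j k hk2
    have e2 := sI_spec i' j k hk2
    have : i = i' := by linarith
    rw [this]
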